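/- Let k be an algebraically closed field and A a finite-dimensional k-algebra. Let η be a natural endomorphism of the identity functor on the category of right A-modules and set z_η := η_A(1) ∈ A, where η_A is the component of η at the right regular module A. Then z_η lies in the center Z(A), and the following are equivalent: (i) for every finitely generated projective right A-module P and every f ∈ J_P one has η_P ∘ f = 0; (ii) z_η·x = 0 for every x in the Jacobson radical Jac(A), i.e. z_η belongs to the Reynolds ideal Rey(A). -/

import Mathlib

universe u

open MulOpposite

section JacobsonAux

variable {R : Type*} [Ring R]

/-- If `a * b + 1` is a unit, so is `b * a + 1` (standard swap trick). -/
private lemma isUnit_swap {a b : R} (h : IsUnit (a * b + 1)) : IsUnit (b * a + 1) := by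
  obtain ⟨u, hu⟩ := h
  have hv1 : (a * b + 1) * ↑u⁻¹ = 1 := by rw [← hu]; exact u.mul_inv
  have hv2 : (↑u⁻¹ : R) * (a * b + 1) = 1 := by rw [← hu]; exact u.inv_mul
  set v : R := ↑u⁻¹ with hv
  have e1 : (b * a + 1) * (1 - b * v * a) = 1 + b * ((1 - (a * b + 1) * v)) * a := by
    noncomm_ring
  have e2 : (1 - b * v * a) * (b * a + 1) = 1 + b * ((1 - v * (a * b + 1))) * a := by
    noncomm_ring
  rw [hv1] at e1
  rw [hv2] at e2
  simp only [sub_self, mul_zero, zero_mul, add_zero] at e1 e2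
  exact ⟨⟨b * a + 1, 1 - b * v * a, e1, e2⟩, rfl⟩

/-- Two-sided unit characterisation of the Jacobson radical of `⊥` in any ring. -/
private lemma mem_jacobson_bot_iff' {x : R} :
    x ∈ Ideal.jacobson (⊥ : Ideal R) ↔ ∀ y, IsUnit (y * x + 1) := by
  constructor
  · intro h y
    obtain ⟨z, hz⟩ := Ideal.mem_jacobson_iff.1 h y
    rw [Ideal.mem_bot, sub_eq_zero] at hz
    obtain ⟨w, hw⟩ := Ideal.mem_jacobson_iff.1 h (-(z * y))
    rw [Ideal.mem_bot, sub_eq_zero] at hw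
    have hz1 : z * (y * x + 1) = 1 := by rw [mul_add, mul_one, ← mul_assoc]; exact hz
    have hzeq : z = 1 - z * y * x := by rw [← hz]; abel
    have hwz : w * z = 1 := by
      calc w * z = w * (-(z * y)) * x + w := by
            conv_lhs => rw [hzeq]
            noncomm_ring
        _ = 1 := hw
    have hw' : y * x + 1 = w := by
      calc y * x + 1 = (w * z) * (y * x + 1) := by rw [hwz, one_mul]
        _ = w * (z * (y * x + 1)) := by rw [mul_assoc]
        _ = w := by rw [hz1, mul_one]
    exact ⟨⟨y * x + 1, z, by rw [hw']; exact hwz, hz1⟩, rfl⟩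
  · intro h
    rw [Ideal.mem_jacobson_iff]
    intro y
    obtain ⟨u, hu⟩ := h y
    refine ⟨↑u⁻¹, ?_⟩
    rw [Ideal.mem_bot, sub_eq_zero]
    have huinv : (↑u⁻¹ : R) * (y * x + 1) = 1 := by rw [← hu]; exact u.inv_mul
    calc (↑u⁻¹ : R) * y * x + ↑u⁻¹ = ↑u⁻¹ * (y * x + 1) := by noncomm_ring
      _ = 1 := huinv

/-- The Jacobson radical is left-right symmetric. -/
private lemma op_mem_jacobson_iff {x : R} :
    op x ∈ Ideal.jacobson (⊥ : Ideal Rᵐᵒᵖ) ↔ x ∈ Ideal.jacobson (⊥ : Ideal R) := by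
  rw [mem_jacobson_bot_iff', mem_jacobson_bot_iff']
  constructor
  · intro h y
    have h1 := h (op y)
    have : op y * op x + 1 = op (x * y + 1) := by rw [← op_mul, ← op_one, ← op_add]
    rw [this, isUnit_op] at h1
    exact isUnit_swap h1
  · intro h y
    have h1 : IsUnit (x * unop y + 1) := isUnit_swap (h (unop y))
    have : y * op x + 1 = op (x * unop y + 1) := by
      rw [← op_unop y, ← op_mul, op_unop, ← op_one, ← op_add]
    rw [this, isUnit_op]
    exact h1

/-- Elements of the Jacobson radical annihilate simple modules. -/
private lemma jac_smul_simple {S : Type*} [AddCommGroup S] [Module R S]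
    (hS : IsSimpleModule R S) {x : R} (hx : x ∈ Ideal.jacobson (⊥ : Ideal R)) (s : S) :
    x • s = 0 := by
  haveI := hS
  by_cases hs : s = 0
  · simp [hs]
  · have hm := IsSimpleModule.ker_toSpanSingleton_isMaximal R hs
    have hxm : x ∈ LinearMap.ker (LinearMap.toSpanSingleton R S s) :=
      (Submodule.mem_sInf.mp hx) _ ⟨bot_le, hm⟩
    simpa using hxm

end JacobsonAux

section RadAux

variable {R : Type u} [Ring R]

/-- A "radical" lemma: in a projective module, any element killed by all maps into simple
modules lies in `Jac(R) • P`. -/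
private lemma mem_jacobson_smul_top {P : Type u} [AddCommGroup P] [Module R P]
    [Module.Projective R P] {p : P}
    (hp : ∀ (S : Type u) [AddCommGroup S] [Module R S], IsSimpleModule R S →
      ∀ u : P →ₗ[R] S, u p = 0) :
    p ∈ Ideal.jacobson (⊥ : Ideal R) • (⊤ : Submodule R P) := by
  obtain ⟨s, hs⟩ := Module.projective_def.mp ‹Module.Projective R P›
  set J := Ideal.jacobson (⊥ : Ideal R) with hJ
  have hcoord : ∀ a : P, s p a ∈ J := by
    intro a
    refine Submodule.mem_sInf.mpr ?_
    rintro m ⟨-, hm⟩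
    have hsimple : IsSimpleModule R (R ⧸ m) :=
      isSimpleModule_iff_isCoatom.mpr (Ideal.isMaximal_def.mp hm)
    have h0 := hp (R ⧸ m) hsimple ((Submodule.mkQ m) ∘ₗ (Finsupp.lapply a) ∘ₗ s)
    simp only [LinearMap.comp_apply, Finsupp.lapply_apply, Submodule.mkQ_apply] at h0
    rwa [Submodule.Quotient.mk_eq_zero] at h0
  have hsp : s p ∈ J • (⊤ : Submodule R (P →₀ R)) := by
    rw [← Finsupp.sum_single (s p), Finsupp.sum]
    refine Submodule.sum_mem _ ?_
    intro a _
    have h1 : Finsupp.single a (s p a) = (s p a) • Finsupp.single a (1 : R) := by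
      rw [Finsupp.smul_single, smul_eq_mul, mul_one]
    rw [h1]
    exact Submodule.smul_mem_smul (hcoord a) Submodule.mem_top
  have hmap := Submodule.map_smul'' J (⊤ : Submodule R (P →₀ R))
      (Finsupp.linearCombination R (id : P → P))
  have hmem : Finsupp.linearCombination R (id : P → P) (s p) ∈
      Submodule.map (Finsupp.linearCombination R (id : P → P)) (J • ⊤) := ⟨s p, hsp, rfl⟩
  rw [hmap] at hmem
  rw [hs p] at hmem
  exact (smul_mono_right _ le_top : _ ≤ J • (⊤ : Submodule R P)) hmem

end RadAux

section NatEndoAux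

/-- A natural endomorphism of the identity functor on the category of right `A`-modules
(formalised as left `Aᵐᵒᵖ`-modules). -/
structure NatEndo (A : Type u) [Ring A] : Type (u + 1) where
  app : ∀ (M : Type u) [AddCommGroup M] [Module Aᵐᵒᵖ M], M →ₗ[Aᵐᵒᵖ] M
  naturality : ∀ (M N : Type u) [AddCommGroup M] [Module Aᵐᵒᵖ M]
      [AddCommGroup N] [Module Aᵐᵒᵖ N] (h : M →ₗ[Aᵐᵒᵖ] N),
      h ∘ₗ app M = app N ∘ₗ h

variable {A : Type u} [Ring A]

/-- Any natural endomorphism is given by the (opposite) scalar action of `η_A(1)`. -/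
private lemma natEndo_apply (η : NatEndo A) (M : Type u) [AddCommGroup M] [Module Aᵐᵒᵖ M]
    (m : M) : η.app M m = op (η.app A 1) • m := by
  let g : A →ₗ[Aᵐᵒᵖ] M :=
    { toFun := fun a => op a • m
      map_add' := fun a b => by show op (a + b) • m = op a • m + op b • m; rw [op_add, add_smul]
      map_smul' := fun c a => by
        show op (a * unop c) • m = c • (op a • m)
        rw [op_mul, op_unop, mul_smul]
      }
  have h := LinearMap.congr_fun (η.naturality A M g) 1
  have h2 : g (1 : A) = m := by show op (1 : A) • m = m; rw [op_one, one_smul]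
  rw [LinearMap.comp_apply, LinearMap.comp_apply, h2] at h
  exact h.symm

end NatEndoAux

/-- For a natural endomorphism `η` of the identity functor on right
`A`-modules, the element `z_η = η_A 1` is central, and `η` annihilates `J_P` for every
finitely generated projective right `A`-module `P` iff `z_η` annihilates the Jacobson
radical, i.e. `z_η` lies in the Reynolds ideal. -/
theorem natEndo_reynolds_characterisation
    (k A : Type u) [Field k] [IsAlgClosed k] [Ring A] [Algebra k A] [FiniteDimensional k A]
    (η : NatEndo A) :
    η.app A 1 ∈ Subring.center A ∧
    ((∀ (P : Type u) [AddCommGroup P] [Module Aᵐᵒᵖ P]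
        [Module.Finite Aᵐᵒᵖ P] [Module.Projective Aᵐᵒᵖ P] (f : P →ₗ[Aᵐᵒᵖ] P),
        (∀ (S : Type u) [AddCommGroup S] [Module Aᵐᵒᵖ S], IsSimpleModule Aᵐᵒᵖ S →
          ∀ u : P →ₗ[Aᵐᵒᵖ] S, u ∘ₗ f = 0) →
        η.app P ∘ₗ f = 0) ↔
      (∀ x ∈ Ideal.jacobson (⊥ : Ideal A), η.app A 1 * x = 0)) := by
  set z := η.app A 1 with hz
  have key : ∀ a : A, η.app A a = a * z := by
    intro a
    rw [natEndo_apply η A a, op_smul_eq_mul]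
  have hcentral : ∀ a : A, a * z = z * a := by
    intro a
    have h1 : η.app A a = a * z := key a
    have h2 : η.app A a = z * a := by
      have ha : a = op a • (1 : A) := by rw [op_smul_eq_mul, one_mul]
      conv_lhs => rw [ha]
      rw [map_smul, op_smul_eq_mul]
    rw [← h1, h2]
  refine ⟨Subring.mem_center_iff.mpr (fun a => hcentral a), ?_⟩
  constructor
  · -- (i) → (ii)
    intro h1 x hx
    let e : Aᵐᵒᵖ ≃ₗ[Aᵐᵒᵖ] A :=
      { toFun := unop
        invFun := op
        map_add' := fun a b => rfl
        map_smul' := fun c d => rfl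
        left_inv := fun a => rfl
        right_inv := fun a => rfl }
    haveI : Module.Finite Aᵐᵒᵖ A := Module.Finite.equiv e
    haveI : Module.Projective Aᵐᵒᵖ A := Module.Projective.of_equiv e
    let f : A →ₗ[Aᵐᵒᵖ] A :=
      { toFun := fun a => x * a
        map_add' := fun a b => mul_add x a b
        map_smul' := fun c a => by
          show x * (a * unop c) = (x * a) * unop c
          rw [mul_assoc] }
    have hann : ∀ (S : Type u) [AddCommGroup S] [Module Aᵐᵒᵖ S], IsSimpleModule Aᵐᵒᵖ S →
        ∀ u : A →ₗ[Aᵐᵒᵖ] S, u ∘ₗ f = 0 := by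
      intro S _ _ hS u
      refine LinearMap.ext fun a => ?_
      simp only [LinearMap.comp_apply, LinearMap.zero_apply]
      have hfa : f a = op a • x := by rw [op_smul_eq_mul]; rfl
      rw [hfa, map_smul]
      have hux : u x = 0 := by
        have hx1 : x = op x • (1 : A) := by rw [op_smul_eq_mul, one_mul]
        rw [hx1, map_smul]
        have hopx : op x ∈ Ideal.jacobson (⊥ : Ideal Aᵐᵒᵖ) := op_mem_jacobson_iff.mpr hx
        exact jac_smul_simple hS hopx (u 1)
      rw [hux, smul_zero]
    have hval := LinearMap.congr_fun (h1 A f hann) 1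
    simp only [LinearMap.comp_apply, LinearMap.zero_apply] at hval
    rw [show f (1 : A) = x from mul_one x] at hval
    rw [key x] at hval
    rwa [hcentral x] at hval
  · -- (ii) → (i)
    intro h2 P _ _ _ _ f hf
    ext p
    simp only [LinearMap.comp_apply, LinearMap.zero_apply]
    rw [natEndo_apply η P (f p)]
    have hmem : f p ∈ Ideal.jacobson (⊥ : Ideal Aᵐᵒᵖ) • (⊤ : Submodule Aᵐᵒᵖ P) := by
      apply mem_jacobson_smul_top
      intro S _ _ hS u
      have := LinearMap.congr_fun (hf S hS u) p
      simpa using this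
    refine Submodule.smul_induction_on hmem (fun j hj n _ => ?_) (fun y1 y2 hy1 hy2 => ?_)
    · have hj' : unop j ∈ Ideal.jacobson (⊥ : Ideal A) :=
        op_mem_jacobson_iff.mp (by rwa [op_unop])
      have hzj : op z * j = 0 := by
        calc op z * j = op (unop j * z) := by rw [op_mul, op_unop]
          _ = op (z * unop j) := by rw [hcentral (unop j)]
          _ = 0 := by rw [h2 (unop j) hj', op_zero]
      rw [← mul_smul, hzj, zero_smul]
    · rw [smul_add, hy1, hy2, add_zero]
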